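/- Let π be a partition of ℕ each of whose blocks has an asymptotic frequency, and assume ∑_{l≥1} |π(l)| = 1. Then for every partition σ of ℕ and every i ≥ 1, the block Coag(π,σ)(i) has an asymptotic frequency, and |Coag(π,σ)(i)| = ∑_{j∈σ(i)} |π(j)|. -/

import Mathlib

/-- The least element of the block of `a` in the partition `π` of `ℕ`. -/
noncomputable def leaderOf (π : Setoid ℕ) (a : ℕ) : ℕ := sInf {k | π.r a k}

/-- The (0-based) index of the block of `a` among the blocks of `π`, the blocks
being ordered by increasing least element. -/
noncomputable def blockIdx (π : Setoid ℕ) (a : ℕ) : ℕ :=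
  Set.ncard {l | l < leaderOf π a ∧ leaderOf π l = l}

/-- The `i`-th block (0-based) of the partition `π`. -/
def block (π : Setoid ℕ) (i : ℕ) : Set ℕ := {a | blockIdx π a = i}

/-- The coagulation of two partitions: its `i`-th block is `⋃_{j ∈ σ(i)} π(j)`. -/
noncomputable def Coag (π σ : Setoid ℕ) : Setoid ℕ := Setoid.comap (blockIdx π) σ

/-- `A ⊆ ℕ` has asymptotic frequency `l`, i.e.
`#(A ∩ {0,…,m-1}) / m → l` as `m → ∞`. -/
def HasFreq (A : Set ℕ) (l : ℝ) : Prop :=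
  Filter.Tendsto (fun m : ℕ => ((A ∩ Set.Iio m).ncard : ℝ) / m) Filter.atTop (nhds l)


section Struct

variable (π : Setoid ℕ)

lemma rel_leaderOf (a : ℕ) : π.r a (leaderOf π a) :=
  Nat.sInf_mem (⟨a, π.refl' a⟩ : Set.Nonempty {k | π.r a k})

lemma leaderOf_le (a : ℕ) : leaderOf π a ≤ a := Nat.sInf_le (π.refl' a)

lemma leaderOf_eq_of_rel {a b : ℕ} (h : π.r a b) : leaderOf π a = leaderOf π b := by
  unfold leaderOf
  congr 1
  ext k
  exact ⟨fun hk => π.trans' (π.symm' h) hk, fun hk => π.trans' h hk⟩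

lemma leaderOf_idem (a : ℕ) : leaderOf π (leaderOf π a) = leaderOf π a :=
  (leaderOf_eq_of_rel π (rel_leaderOf π a)).symm

lemma rel_iff_leaderOf_eq {a b : ℕ} : π.r a b ↔ leaderOf π a = leaderOf π b :=
  ⟨leaderOf_eq_of_rel π, fun h =>
    π.trans' (rel_leaderOf π a) (h ▸ π.symm' (rel_leaderOf π b))⟩

/-- The leader predicate. -/
def IsLdr (a : ℕ) : Prop := leaderOf π a = a

noncomputable instance (ρ : Setoid ℕ) : DecidablePred (IsLdr ρ) := fun _ => Classical.dec _

lemma blockIdx_eq_count (a : ℕ) :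
    blockIdx π a = Nat.count (IsLdr π) (leaderOf π a) := by
  rw [Nat.count_eq_card_filter_range, blockIdx, ← Set.ncard_coe_finset]
  congr 1
  ext l
  rw [Finset.mem_coe, Finset.mem_filter, Finset.mem_range]
  rfl

lemma blockIdx_leaderOf (a : ℕ) : blockIdx π (leaderOf π a) = blockIdx π a := by
  unfold blockIdx
  rw [leaderOf_idem]

lemma blockIdx_eq_iff {a b : ℕ} : blockIdx π a = blockIdx π b ↔ π.r a b := by
  rw [rel_iff_leaderOf_eq π, blockIdx_eq_count, blockIdx_eq_count]
  constructor
  · intro h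
    exact Nat.count_injective (p := IsLdr π) (leaderOf_idem π a) (leaderOf_idem π b) h
  · intro h; rw [h]

variable (σ : Setoid ℕ)

lemma coag_rel (a b : ℕ) : (Coag π σ).r a b ↔ σ.r (blockIdx π a) (blockIdx π b) :=
  Iff.rfl

/-- τ-leaders are exactly π-leaders whose block index is a σ-leader. -/
lemma coag_leader_iff (b : ℕ) :
    IsLdr (Coag π σ) b ↔ IsLdr π b ∧ IsLdr σ (blockIdx π b) := by
  constructor
  · intro h
    have hmin : ∀ k, (Coag π σ).r b k → b ≤ k := by
      intro k hk
      calc b = leaderOf (Coag π σ) b := h.symm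
        _ ≤ k := Nat.sInf_le hk
    have hπ : IsLdr π b := by
      have : (Coag π σ).r b (leaderOf π b) := by
        show σ.r (blockIdx π b) (blockIdx π (leaderOf π b))
        simp only [blockIdx_leaderOf]
        exact σ.refl' _
      exact le_antisymm (leaderOf_le π b) (hmin _ this)
    refine ⟨hπ, ?_⟩
    have hb : blockIdx π b = Nat.count (IsLdr π) b := by
      rw [blockIdx_eq_count, show leaderOf π b = b from hπ]
    set j0 := leaderOf σ (blockIdx π b) with hj0
    have hj0le : j0 ≤ blockIdx π b := leaderOf_le σ _
    rcases eq_or_lt_of_le hj0le with heq | hlt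
    · exact heq
    · exfalso
      rw [hb] at hlt
      have hcard : ∀ hf : (setOf (IsLdr π)).Finite, j0 < hf.toFinset.card := by
        intro hfin
        exact hlt.trans_le (Nat.count_le_card hfin b)
      set c := Nat.nth (IsLdr π) j0 with hc
      have hpc : IsLdr π c := Nat.nth_mem j0 hcard
      have hcount : Nat.count (IsLdr π) c = j0 := Nat.count_nth hcard
      have hbic : blockIdx π c = j0 := by
        rw [blockIdx_eq_count, show leaderOf π _ = _ from hpc, hcount]
      have hrel : (Coag π σ).r b c := by
        show σ.r (blockIdx π b) (blockIdx π c)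
        rw [hbic, hj0]
        exact rel_leaderOf σ (blockIdx π b)
      have hle : b ≤ c := hmin _ hrel
      have := Nat.count_monotone (IsLdr π) hle
      omega
  · rintro ⟨hπ, hσ⟩
    have hb : blockIdx π b = Nat.count (IsLdr π) b := by
      rw [blockIdx_eq_count, show leaderOf π b = b from hπ]
    refine le_antisymm (leaderOf_le _ b) ?_
    refine le_csInf ⟨b, (Coag π σ).refl' b⟩ ?_
    intro k hk
    by_contra hlt
    push_neg at hlt
    have h1 : blockIdx π b ≤ blockIdx π k := by
      have : leaderOf σ (blockIdx π b) = leaderOf σ (blockIdx π k) :=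
        leaderOf_eq_of_rel σ hk
      calc blockIdx π b = leaderOf σ (blockIdx π b) := hσ.symm
        _ = leaderOf σ (blockIdx π k) := this
        _ ≤ blockIdx π k := leaderOf_le σ _
    have h2 : Nat.count (IsLdr π) (leaderOf π k) < Nat.count (IsLdr π) b :=
      Nat.count_strict_mono (leaderOf_idem π k) ((leaderOf_le π k).trans_lt hlt)
    rw [blockIdx_eq_count π k] at h1
    omega

lemma count_coag_leader {b : ℕ} (hb : IsLdr π b) :
    Nat.count (IsLdr (Coag π σ)) b = Nat.count (IsLdr σ) (Nat.count (IsLdr π) b) := by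
  rw [Nat.count_eq_card_filter_range, Nat.count_eq_card_filter_range]
  refine Finset.card_bij' (fun x _ => Nat.count (IsLdr π) x)
      (fun j _ => Nat.nth (IsLdr π) j) ?_ ?_ ?_ ?_
  · intro x hx
    simp only [Finset.mem_filter, Finset.mem_range] at hx ⊢
    obtain ⟨hxb, hxl⟩ := hx
    rw [coag_leader_iff] at hxl
    obtain ⟨hxπ, hxσ⟩ := hxl
    have hbi : blockIdx π x = Nat.count (IsLdr π) x := by
      rw [blockIdx_eq_count, show leaderOf π x = x from hxπ]
    exact ⟨Nat.count_strict_mono hxπ hxb, hbi ▸ hxσ⟩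
  · intro j hj
    simp only [Finset.mem_filter, Finset.mem_range] at hj ⊢
    obtain ⟨hjb, hjl⟩ := hj
    have hcard : ∀ hf : (setOf (IsLdr π)).Finite, j < hf.toFinset.card :=
      fun hfin => hjb.trans_le (Nat.count_le_card hfin b)
    have hpc : IsLdr π (Nat.nth (IsLdr π) j) := Nat.nth_mem j hcard
    have hcount : Nat.count (IsLdr π) (Nat.nth (IsLdr π) j) = j := Nat.count_nth hcard
    have hbi : blockIdx π (Nat.nth (IsLdr π) j) = j := by
      rw [blockIdx_eq_count, show leaderOf π _ = _ from hpc, hcount]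
    refine ⟨Nat.lt_of_count_lt_count (p := IsLdr π) (by omega), ?_⟩
    rw [coag_leader_iff, hbi]
    exact ⟨hpc, hjl⟩
  · intro x hx
    simp only [Finset.mem_filter, Finset.mem_range] at hx
    have : IsLdr π x := ((coag_leader_iff π σ x).1 hx.2).1
    exact Nat.nth_count this
  · intro j hj
    simp only [Finset.mem_filter, Finset.mem_range] at hj
    have hcard : ∀ hf : (setOf (IsLdr π)).Finite, j < hf.toFinset.card :=
      fun hfin => hj.1.trans_le (Nat.count_le_card hfin b)
    exact Nat.count_nth hcard

theorem blockIdx_coag (a : ℕ) :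
    blockIdx (Coag π σ) a = blockIdx σ (blockIdx π a) := by
  set b := leaderOf (Coag π σ) a with hbdef
  have hbl : IsLdr (Coag π σ) b := leaderOf_idem (Coag π σ) a
  obtain ⟨hbπ, hbσ⟩ := (coag_leader_iff π σ b).1 hbl
  have hrel : (Coag π σ).r a b := rel_leaderOf (Coag π σ) a
  have hσrel : σ.r (blockIdx π a) (blockIdx π b) := hrel
  have hLσ : leaderOf σ (blockIdx π a) = blockIdx π b := by
    rw [leaderOf_eq_of_rel σ hσrel, show leaderOf σ (blockIdx π b) = blockIdx π b from hbσ]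
  rw [blockIdx_eq_count (Coag π σ) a, ← hbdef, blockIdx_eq_count σ, hLσ,
    count_coag_leader π σ hbπ, blockIdx_eq_count π b, show leaderOf π b = b from hbπ]

end Struct


open Filter Finset

noncomputable def cnt (A : Set ℕ) (m : ℕ) : ℕ := (A ∩ Set.Iio m).ncard

open Classical in
lemma cnt_eq (A : Set ℕ) (m : ℕ) :
    cnt A m = ((Finset.range m).filter (· ∈ A)).card := by
  rw [cnt, ← Set.ncard_coe_finset]
  congr 1
  ext x
  simp [Set.mem_Iio, and_comm]

open Classical in
lemma sum_cnt_fibers (g : ℕ → ℕ) (F : Finset ℕ) (m : ℕ) :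
    ∑ j ∈ F, cnt (g ⁻¹' {j}) m = ((Finset.range m).filter (fun x => g x ∈ F)).card := by
  simp only [cnt_eq]
  rw [← Finset.card_biUnion]
  · congr 1
    ext x
    simp only [Finset.mem_biUnion, Finset.mem_filter, Finset.mem_range,
      Set.mem_preimage, Set.mem_singleton_iff]
    constructor
    · rintro ⟨j, hj, hx, hgx⟩
      exact ⟨hx, hgx ▸ hj⟩
    · rintro ⟨hx, hg⟩
      exact ⟨g x, hg, hx, rfl⟩
  · intro j _ j' _ hjj'
    simp only [Finset.disjoint_left, Finset.mem_filter, Set.mem_preimage,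
      Set.mem_singleton_iff]
    rintro x ⟨_, hx⟩ ⟨_, hx'⟩
    exact hjj' (hx ▸ hx' ▸ rfl)

open Classical in
lemma cnt_le_of_sub (g : ℕ → ℕ) (G : Finset ℕ) (T : Set ℕ) (hG : ∀ j ∈ G, j ∈ T) (m : ℕ) :
    ∑ j ∈ G, cnt (g ⁻¹' {j}) m ≤ cnt (g ⁻¹' T) m := by
  rw [sum_cnt_fibers, cnt_eq]
  apply Finset.card_le_card
  intro x hx
  simp only [Finset.mem_filter, Finset.mem_range, Set.mem_preimage] at hx ⊢
  exact ⟨hx.1, hG _ hx.2⟩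

open Classical in
lemma cnt_add_le (g : ℕ → ℕ) (G : Finset ℕ) (T : Set ℕ) (hG : ∀ j ∈ G, j ∉ T) (m : ℕ) :
    cnt (g ⁻¹' T) m + ∑ j ∈ G, cnt (g ⁻¹' {j}) m ≤ m := by
  rw [sum_cnt_fibers, cnt_eq]
  have hdisj : Disjoint ((Finset.range m).filter (· ∈ g ⁻¹' T))
      ((Finset.range m).filter (fun x => g x ∈ G)) := by
    simp only [Finset.disjoint_left, Finset.mem_filter, Set.mem_preimage]
    rintro x ⟨_, hx⟩ ⟨_, hx'⟩
    exact hG _ hx' hx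
  rw [← Finset.card_union_of_disjoint hdisj]
  calc ((Finset.range m).filter (· ∈ g ⁻¹' T) ∪
        (Finset.range m).filter (fun x => g x ∈ G)).card
      ≤ (Finset.range m).card := by
        apply Finset.card_le_card
        intro x hx
        rcases Finset.mem_union.1 hx with h | h <;>
          exact (Finset.mem_filter.1 h).1
    _ = m := Finset.card_range m

lemma freq_nonneg {A : Set ℕ} {l : ℝ} (h : HasFreq A l) : 0 ≤ l := by
  refine ge_of_tendsto' h fun m => ?_
  positivity

lemma freq_preimage (g : ℕ → ℕ) (f : ℕ → ℝ) (hf : ∀ j, HasFreq (g ⁻¹' {j}) (f j))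
    (hsum : HasSum f 1) (T : Set ℕ) :
    HasFreq (g ⁻¹' T) (∑' j, T.indicator f j) := by
  classical
  have hfnn : ∀ j, 0 ≤ f j := fun j => freq_nonneg (hf j)
  have hsummable : Summable f := hsum.summable
  have hsInd : Summable (T.indicator f) := hsummable.indicator T
  set s := ∑' j, T.indicator f j with hs
  rw [HasFreq, Metric.tendsto_atTop]
  intro ε hε
  obtain ⟨F1, hF1⟩ := Metric.tendsto_atTop.1 hsum (ε / 4) (by positivity)
  obtain ⟨F2, hF2⟩ := Metric.tendsto_atTop.1 hsInd.hasSum (ε / 4) (by positivity)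
  set F := F1 ∪ F2 with hF
  have hA : |∑ j ∈ F, f j - 1| < ε / 4 := by
    have := hF1 F le_sup_left
    rwa [Real.dist_eq] at this
  have hB : |∑ j ∈ F, T.indicator f j - s| < ε / 4 := by
    have := hF2 F le_sup_right
    rwa [Real.dist_eq, ← hs] at this
  set δ := ε / (4 * (F.card + 1)) with hδ
  have hδpos : 0 < δ := by positivity
  have hev : ∀ᶠ m : ℕ in atTop, ∀ j ∈ F,
      |((cnt (g ⁻¹' {j}) m : ℝ) / m) - f j| ≤ δ := by
    rw [Filter.eventually_all_finset]
    intro j _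
    obtain ⟨N, hN⟩ := Metric.tendsto_atTop.1 (hf j) δ hδpos
    refine eventually_atTop.2 ⟨N, fun m hm => ?_⟩
    have := hN m hm
    rw [Real.dist_eq] at this
    exact this.le
  obtain ⟨N, hN⟩ := eventually_atTop.1 (hev.and (eventually_ge_atTop 1))
  refine ⟨N, fun m hm => ?_⟩
  obtain ⟨hclose, hm1⟩ := hN m hm
  have hmpos : (0 : ℝ) < m := by exact_mod_cast hm1
  set c : ℝ := ((g ⁻¹' T ∩ Set.Iio m).ncard : ℝ) / m with hc
  have hcc : c = (cnt (g ⁻¹' T) m : ℝ) / m := rfl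
  set Fi := F.filter (· ∈ T) with hFi
  set Fo := F.filter (· ∉ T) with hFo
  -- the two sum identities
  have hSI : ∑ j ∈ Fi, f j = ∑ j ∈ F, T.indicator f j := by
    rw [hFi, Finset.sum_filter]
    exact Finset.sum_congr rfl fun j _ => by rw [Set.indicator_apply]
  have hsplit : ∑ j ∈ Fi, f j + ∑ j ∈ Fo, f j = ∑ j ∈ F, f j :=
    Finset.sum_filter_add_sum_filter_not F (· ∈ T) f
  -- card bounds
  have hδeq : ((F.card : ℝ) + 1) * δ = ε / 4 := by
    rw [hδ]
    have : (4 : ℝ) * (F.card + 1) ≠ 0 := by positivity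
    field_simp
  have hcardFi : (Fi.card : ℝ) * δ ≤ ε / 4 := by
    have h1 : (Fi.card : ℝ) ≤ (F.card : ℝ) + 1 := by
      have h2 : Fi.card ≤ F.card := Finset.card_filter_le F (· ∈ T)
      have h3 : (Fi.card : ℝ) ≤ (F.card : ℝ) := by exact_mod_cast h2
      linarith
    calc (Fi.card : ℝ) * δ ≤ ((F.card : ℝ) + 1) * δ :=
          mul_le_mul_of_nonneg_right h1 hδpos.le
      _ = ε / 4 := hδeq
  have hcardFo : (Fo.card : ℝ) * δ ≤ ε / 4 := by
    have h1 : (Fo.card : ℝ) ≤ (F.card : ℝ) + 1 := by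
      have h2 : Fo.card ≤ F.card := Finset.card_filter_le F (· ∉ T)
      have h3 : (Fo.card : ℝ) ≤ (F.card : ℝ) := by exact_mod_cast h2
      linarith
    calc (Fo.card : ℝ) * δ ≤ ((F.card : ℝ) + 1) * δ :=
          mul_le_mul_of_nonneg_right h1 hδpos.le
      _ = ε / 4 := hδeq
  -- lower bound
  have hlow : ∑ j ∈ Fi, ((cnt (g ⁻¹' {j}) m : ℝ) / m) ≤ c := by
    rw [hcc, ← Finset.sum_div]
    gcongr
    exact_mod_cast cnt_le_of_sub g Fi T (fun j hj => (Finset.mem_filter.1 hj).2) m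
  have hlow2 : ∀ j ∈ Fi, f j - δ ≤ (cnt (g ⁻¹' {j}) m : ℝ) / m := by
    intro j hj
    have h := hclose j (Finset.filter_subset _ _ hj)
    have := (abs_le.1 h).1
    linarith
  have hlowsum : ∑ j ∈ Fi, f j - (Fi.card : ℝ) * δ ≤ ∑ j ∈ Fi, ((cnt (g ⁻¹' {j}) m : ℝ) / m) := by
    have h := Finset.sum_le_sum hlow2
    rw [Finset.sum_sub_distrib, Finset.sum_const, nsmul_eq_mul] at h
    exact h
  have hlower : s - ε / 2 ≤ c := by
    have h1 := (abs_lt.1 hB).1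
    have h2 : s - ε / 4 ≤ ∑ j ∈ Fi, f j := by rw [hSI]; linarith
    linarith
  -- upper bound
  have hup1 : c + ∑ j ∈ Fo, ((cnt (g ⁻¹' {j}) m : ℝ) / m) ≤ 1 := by
    rw [hcc, ← Finset.sum_div, ← add_div, div_le_one hmpos]
    have := cnt_add_le g Fo T (fun j hj => (Finset.mem_filter.1 hj).2) m
    exact_mod_cast this
  have hup2 : ∀ j ∈ Fo, f j - δ ≤ (cnt (g ⁻¹' {j}) m : ℝ) / m := by
    intro j hj
    have h := hclose j (Finset.filter_subset _ _ hj)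
    have := (abs_le.1 h).1
    linarith
  have hupsum : ∑ j ∈ Fo, f j - (Fo.card : ℝ) * δ ≤ ∑ j ∈ Fo, ((cnt (g ⁻¹' {j}) m : ℝ) / m) := by
    have h := Finset.sum_le_sum hup2
    rw [Finset.sum_sub_distrib, Finset.sum_const, nsmul_eq_mul] at h
    exact h
  have hupper : c ≤ s + 3 * ε / 4 := by
    have h1 := (abs_lt.1 hA).1
    have h2 := (abs_lt.1 hB).2
    have h3 : ∑ j ∈ Fi, f j ≤ s + ε / 4 := by rw [hSI]; linarith
    linarith
  rw [Real.dist_eq, abs_lt]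
  constructor <;> linarith


/-- if every block of `π` has an asymptotic frequency and these
frequencies sum to `1`, then for every partition `σ` and every `i`, the `i`-th
block of `Coag π σ` has asymptotic frequency `∑_{j ∈ σ(i)} |π(j)|`. -/
theorem stmt4 (π : Setoid ℕ) (f : ℕ → ℝ) (hf : ∀ l : ℕ, HasFreq (block π l) (f l))
    (hsum : HasSum f 1) (σ : Setoid ℕ) (i : ℕ) :
    HasFreq (block (Coag π σ) i) (∑' j : (block σ i), f (j : ℕ)) := by
  have hblock : block (Coag π σ) i = (blockIdx π) ⁻¹' (block σ i) := by
    ext a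
    simp only [block, Set.mem_setOf_eq, Set.mem_preimage, blockIdx_coag]
  have hts : (∑' j : (block σ i), f (j : ℕ)) = ∑' j, (block σ i).indicator f j :=
    tsum_subtype _ f
  rw [hblock, hts]
  refine freq_preimage (blockIdx π) f (fun j => ?_) hsum (block σ i)
  have hfib : blockIdx π ⁻¹' {j} = block π j := by
    ext a
    simp [block]
  rw [hfib]
  exact hf j
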